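/- arXiv:1709.04233 — 3 statements merged into one kernel-verified Lean document; each statement's English description precedes it below -/
import Mathlib

section
/- For any function f : ℝⁿ → ℝ it holds that Lip(f) = sup_{x∈ℝⁿ} Lip_x(f), where the equality is understood in [0,∞]. -/
open MeasureTheory Metric Set Filter
open scoped RealInnerProductSpace ENNReal NNReal Topology

noncomputable section

/-- Euclidean space ℝⁿ. -/
abbrev En (n : ℕ) := EuclideanSpace ℝ (Fin n)

/-- The cone `C_{e,α} = {x : ⟨x,e⟩ ≥ α‖x‖‖e‖}`. -/
def cone {n : ℕ} (e : En n) (α : ℝ) : Set (En n) :=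
  {x | α * ‖x‖ * ‖e‖ ≤ (inner ℝ x e : ℝ)}

/-- A Lipschitz curve whose derivative lies a.e. in the cone `C_{e,α}`. -/
def IsConeCurve {n : ℕ} (e : En n) (α : ℝ) (γ : ℝ → En n) : Prop :=
  (∃ K : ℝ≥0, LipschitzWith K γ) ∧ ∀ᵐ t ∂(volume : Measure ℝ), deriv γ t ∈ cone e α

open scoped Classical in
/-- The `(e,α)`-width of an open set. -/
noncomputable def widthOpen {n : ℕ} (e : En n) (α : ℝ) (G : Set (En n)) : ℝ≥0∞ :=
  if e = 0 ∨ 1 < α then 0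
  else ⨆ γ : {γ : ℝ → En n // IsConeCurve e α γ}, μH[1] (G ∩ Set.range γ.1)

/-- The `(e,α)`-width of an arbitrary set. -/
noncomputable def width {n : ℕ} (e : En n) (α : ℝ) (E : Set (En n)) : ℝ≥0∞ :=
  ⨅ (G : Set (En n)) (_ : IsOpen G) (_ : E ⊆ G), widthOpen e α G

/-- The set `𝒩(E,x)`. -/
def NormalSet {n : ℕ} (E : Set (En n)) (x : En n) : Set (En n) :=
  {e | ∀ ε > 0, ∃ r > 0, width e ε (ball x r ∩ E) = 0}

/-- Cone unrectifiable sets. -/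
def ConeUnrectifiable {n : ℕ} (E : Set (En n)) : Prop :=
  ∀ x ∈ E, NormalSet E x ≠ {0}

/-- Uniformly purely unrectifiable sets. -/
def UniformlyPurelyUnrectifiable {n : ℕ} (E : Set (En n)) : Prop :=
  ∀ x ∈ E, NormalSet E x = Set.univ

/-- Upper directional derivative `D⁺f(x;y)`. -/
noncomputable def Dupper {n : ℕ} (f : En n → ℝ) (x y : En n) : ℝ :=
  limsup (fun t : ℝ => (f (x + t • y) - f x) / t) (𝓝[>] (0:ℝ))

/-- Lower directional derivative `D₊f(x;y)`. -/
noncomputable def Dlower {n : ℕ} (f : En n → ℝ) (x y : En n) : ℝ :=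
  liminf (fun t : ℝ => (f (x + t • y) - f x) / t) (𝓝[>] (0:ℝ))

/-- `f ∈ C¹(H)`: differentiable on `H` with continuous gradient. -/
def C1On {n : ℕ} (f : En n → ℝ) (H : Set (En n)) : Prop :=
  (∀ x ∈ H, DifferentiableAt ℝ f x) ∧ ContinuousOn (fun x => gradient f x) H

/-- The (possibly infinite) Lipschitz constant of `f`. -/
noncomputable def lipConst {n : ℕ} (f : En n → ℝ) : ℝ≥0∞ :=
  sInf {L : ℝ≥0∞ | ∀ x y : En n, ENNReal.ofReal |f y - f x| ≤ L * edist y x}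

/-- The pointwise Lipschitz constant of `f` at `x`. -/
noncomputable def lipAt {n : ℕ} (f : En n → ℝ) (x : En n) : ℝ≥0∞ :=
  limsup (fun y => ENNReal.ofReal |f y - f x| / edist y x) (𝓝[≠] x)

/-- An `F_σ` set: a countable union of closed sets. -/
def IsFsigma {n : ℕ} (S : Set (En n)) : Prop :=
  ∃ F : ℕ → Set (En n), (∀ i, IsClosed (F i)) ∧ S = ⋃ i, F i

lemma lipConst_spec {n : ℕ} (f : En n → ℝ) (x y : En n) :
    ENNReal.ofReal |f y - f x| ≤ lipConst f * edist y x := by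
  rcases eq_or_ne y x with rfl | h
  · simp
  have hne : edist y x ≠ 0 := by simpa [edist_eq_zero] using h
  have htop : edist y x ≠ ⊤ := edist_ne_top y x
  rw [← ENNReal.div_le_iff hne htop]
  refine le_sInf fun L hL => ?_
  rw [ENNReal.div_le_iff hne htop]
  exact hL x y

lemma lipAt_le_lipConst {n : ℕ} (f : En n → ℝ) (x : En n) :
    lipAt f x ≤ lipConst f := by
  refine Filter.limsup_le_of_le (by isBoundedDefault) ?_
  filter_upwards [self_mem_nhdsWithin] with y hy
  exact ENNReal.div_le_of_le_mul (lipConst_spec f x y)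

lemma key_lemma {n : ℕ} (f : En n → ℝ) (c : ℝ≥0∞) (hcT : c ≠ ⊤)
    (h : ∀ z, lipAt f z < c) (x y : En n) :
    |f y - f x| ≤ c.toReal * dist y x := by
  -- local estimate at every point
  have loc : ∀ z : En n, ∃ δ > 0, ∀ w, dist w z < δ →
      |f w - f z| ≤ c.toReal * dist w z := by
    intro z
    have hev := Filter.eventually_lt_of_limsup_lt (h z)
    rw [Filter.Eventually, Metric.mem_nhdsWithin_iff] at hev
    obtain ⟨δ, hδ, hδ'⟩ := hev
    refine ⟨δ, hδ, fun w hw => ?_⟩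
    rcases eq_or_ne w z with rfl | hwz
    · simp
    have h1 : ENNReal.ofReal |f w - f z| / edist w z < c :=
      hδ' ⟨by rwa [mem_ball], hwz⟩
    have hne : edist w z ≠ 0 := by simpa [edist_eq_zero] using hwz
    rw [ENNReal.div_lt_iff (Or.inl hne) (Or.inl (edist_ne_top _ _))] at h1
    calc |f w - f z| = (ENNReal.ofReal |f w - f z|).toReal :=
          (ENNReal.toReal_ofReal (abs_nonneg _)).symm
      _ ≤ (c * edist w z).toReal :=
          ENNReal.toReal_mono (ENNReal.mul_ne_top hcT (edist_ne_top _ _)) h1.le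
      _ = c.toReal * dist w z := by
          rw [ENNReal.toReal_mul, edist_dist, ENNReal.toReal_ofReal dist_nonneg]
  -- continuity
  have hcont : Continuous f := by
    rw [continuous_iff_continuousAt]
    intro z
    obtain ⟨δ, hδ, hz⟩ := loc z
    rw [Metric.continuousAt_iff]
    intro ε hε
    refine ⟨min δ (ε / (c.toReal + 1)), lt_min hδ (by positivity), fun {w} hw => ?_⟩
    have h1 : |f w - f z| ≤ c.toReal * dist w z := hz w (lt_of_lt_of_le hw (min_le_left _ _))
    have h2 : dist w z < ε / (c.toReal + 1) := lt_of_lt_of_le hw (min_le_right _ _)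
    have hd : (0:ℝ) ≤ dist w z := dist_nonneg
    have hc0 : (0:ℝ) ≤ c.toReal := ENNReal.toReal_nonneg
    calc dist (f w) (f z) = |f w - f z| := Real.dist_eq _ _
      _ ≤ c.toReal * dist w z := h1
      _ ≤ (c.toReal + 1) * dist w z := by nlinarith
      _ < (c.toReal + 1) * (ε / (c.toReal + 1)) :=
          mul_lt_mul_of_pos_left h2 (by positivity)
      _ = ε := by field_simp
  rcases eq_or_ne y x with rfl | hxy
  · simp
  have hyx : (0:ℝ) < ‖y - x‖ := by
    rw [norm_pos_iff]; exact sub_ne_zero.mpr hxy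
  set φ : ℝ → ℝ := fun t => f (x + t • (y - x)) with hφ
  have hφc : Continuous φ := hcont.comp (by continuity)
  set r : ℝ := c.toReal * ‖y - x‖ with hr
  have hr0 : 0 ≤ r := mul_nonneg ENNReal.toReal_nonneg (norm_nonneg _)
  set S : Set ℝ := Set.Icc 0 1 ∩ {t | |φ t - φ 0| ≤ r * t} with hS
  have h0S : (0:ℝ) ∈ S := by
    constructor
    · exact ⟨le_refl _, zero_le_one⟩
    · simp
  have hSc : IsClosed S :=
    isClosed_Icc.inter (isClosed_le (hφc.sub continuous_const).abs (continuous_const.mul continuous_id))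
  have hbdd : BddAbove S := (bddAbove_Icc (a := (0:ℝ)) (b := 1)).mono (Set.inter_subset_left)
  set T := sSup S with hT
  have hTS : T ∈ S := hSc.csSup_mem ⟨0, h0S⟩ hbdd
  obtain ⟨⟨hT0, hT1⟩, hTle⟩ := hTS
  rcases eq_or_lt_of_le hT1 with hT1e | hT1l
  · -- T = 1
    have : |φ 1 - φ 0| ≤ r * 1 := by rwa [hT1e] at hTle
    simpa [hφ, hr, dist_eq_norm, norm_sub_rev] using this
  · -- T < 1 : contradiction
    exfalso
    set z := x + T • (y - x) with hz
    obtain ⟨δ, hδ, hloc⟩ := loc z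
    set t := min 1 (T + δ / (2 * ‖y - x‖)) with ht
    have hpos : (0:ℝ) < δ / (2 * ‖y - x‖) := div_pos hδ (by positivity)
    have hTt : T < t := lt_min hT1l (by linarith)
    have ht1 : t ≤ 1 := min_le_left _ _
    have ht0 : 0 ≤ t := le_of_lt (lt_of_le_of_lt hT0 hTt)
    have htT : t - T ≤ δ / (2 * ‖y - x‖) := by
      have := min_le_right 1 (T + δ / (2 * ‖y - x‖))
      linarith [this.trans_eq rfl]
    have hdist : dist (x + t • (y - x)) z < δ := by
      have : x + t • (y - x) - z = (t - T) • (y - x) := by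
        rw [hz]; module
      rw [dist_eq_norm, this, norm_smul, Real.norm_eq_abs,
        abs_of_nonneg (by linarith : (0:ℝ) ≤ t - T)]
      calc (t - T) * ‖y - x‖ ≤ (δ / (2 * ‖y - x‖)) * ‖y - x‖ :=
            mul_le_mul_of_nonneg_right htT (norm_nonneg _)
        _ = δ / 2 := by field_simp
        _ < δ := by linarith
    have hstep : |φ t - φ T| ≤ r * (t - T) := by
      have := hloc (x + t • (y - x)) hdist
      have hdz : dist (x + t • (y - x)) z = (t - T) * ‖y - x‖ := by
        have heq : x + t • (y - x) - z = (t - T) • (y - x) := by rw [hz]; module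
        rw [dist_eq_norm, heq, norm_smul, Real.norm_eq_abs,
          abs_of_nonneg (by linarith : (0:ℝ) ≤ t - T)]
      calc |φ t - φ T| = |f (x + t • (y - x)) - f z| := by rw [hφ, hz]
        _ ≤ c.toReal * dist (x + t • (y - x)) z := this
        _ = r * (t - T) := by rw [hdz, hr]; ring
    have htS : t ∈ S := by
      refine ⟨⟨ht0, ht1⟩, ?_⟩
      calc |φ t - φ 0| ≤ |φ t - φ T| + |φ T - φ 0| := abs_sub_le _ _ _
        _ ≤ r * (t - T) + r * T := add_le_add hstep hTle
        _ = r * t := by ring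
    exact absurd (le_csSup hbdd htS) (not_le.mpr hTt)

theorem statement8 (n : ℕ) (f : En n → ℝ) :
    lipConst f = ⨆ x : En n, lipAt f x := by
  refine le_antisymm ?_ (iSup_le fun x => lipAt_le_lipConst f x)
  by_contra hlt
  rw [not_le] at hlt
  obtain ⟨c, hc1, hc2⟩ := exists_between hlt
  have hcT : c ≠ ⊤ := hc2.ne_top
  have hz : ∀ z, lipAt f z < c := fun z => lt_of_le_of_lt (le_iSup _ z) hc1
  have hmem : lipConst f ≤ c := by
    refine sInf_le fun a b => ?_
    calc ENNReal.ofReal |f b - f a| ≤ ENNReal.ofReal (c.toReal * dist b a) :=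
          ENNReal.ofReal_le_ofReal (key_lemma f c hcT hz a b)
      _ = c * edist b a := by
          rw [ENNReal.ofReal_mul ENNReal.toReal_nonneg, ENNReal.ofReal_toReal hcT, edist_dist]
  exact absurd hmem (not_le.mpr hc2)


end
end

section
/- Suppose H ⊆ ℝⁿ is open, g : ℝⁿ → ℝ belongs to C¹(H), ω : ℝⁿ → [0,∞) is continuous and strictly positive on H, and η ∈ (0,1]. Then there is a function ξ : ℝⁿ → [0,∞) such that: (1) ξ is continuous on ℝⁿ, strictly positive on H, and ξ ≤ ω/2; (2) if x ∈ H and h : ℝⁿ → ℝ satisfies |h − g| ≤ 2ξ everywhere, then there is 0 < r < ω(x) such that |h(x+y) − h(x) − ⟨g'(x), y⟩| ≤ ηr whenever ‖y‖ ≤ r. -/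
open MeasureTheory Metric Set Filter
open scoped RealInnerProductSpace ENNReal NNReal Topology

noncomputable section

theorem statement10 (n : ℕ) (H : Set (En n)) (hH : IsOpen H)
    (g : En n → ℝ) (hg : C1On g H)
    (ω : En n → ℝ) (hωc : Continuous ω) (hω0 : ∀ x, 0 ≤ ω x) (hωH : ∀ x ∈ H, 0 < ω x)
    (η : ℝ) (hη : η ∈ Set.Ioc (0:ℝ) 1) :
    ∃ ξ : En n → ℝ, Continuous ξ ∧ (∀ x, 0 ≤ ξ x) ∧ (∀ x ∈ H, 0 < ξ x) ∧
      (∀ x, ξ x ≤ ω x / 2) ∧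
      ∀ x ∈ H, ∀ h : En n → ℝ, (∀ y, |h y - g y| ≤ 2 * ξ y) →
        ∃ r : ℝ, 0 < r ∧ r < ω x ∧ ∀ y : En n, ‖y‖ ≤ r →
          |h (x + y) - h x - (inner ℝ (gradient g x) y : ℝ)| ≤ η * r := by
  classical
  obtain ⟨hη0, hη1⟩ := hη
  -- the good-radius sets
  set S : En n → Set ℝ := fun x =>
    {t | 0 ≤ t ∧ t ≤ 1 ∧ t ≤ ω x / 2 ∧ t ≤ η * ω x / 64 ∧
      ∀ z : En n, dist z x < 32 * t / η → z ∈ H ∧ ‖gradient g z - gradient g x‖ ≤ η / 4}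
    with hSdef
  have hS0 : ∀ x, (0:ℝ) ∈ S x := by
    intro x
    refine ⟨le_refl 0, zero_le_one, by linarith [hω0 x], by nlinarith [hω0 x], ?_⟩
    intro z hz
    have : (0:ℝ) ≤ dist z x := dist_nonneg
    have : 32 * (0:ℝ) / η = 0 := by ring
    rw [this] at hz
    linarith [dist_nonneg (x := z) (y := x)]
  have hSb : ∀ x, BddAbove (S x) := fun x => ⟨1, fun t ht => ht.2.1⟩
  set u : En n → ℝ := fun x => sSup (S x) with hudef
  have hu0 : ∀ x, 0 ≤ u x := fun x => le_csSup (hSb x) (hS0 x)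
  have huω : ∀ x, u x ≤ ω x / 2 := fun x => csSup_le ⟨0, hS0 x⟩ fun t ht => ht.2.2.1
  -- inf-convolution
  set ξ : En n → ℝ := fun x => ⨅ y : En n, (u y + η/32 * dist x y) with hξdef
  have hbdd : ∀ x, BddBelow (Set.range fun y : En n => u y + η/32 * dist x y) := by
    intro x
    refine ⟨0, ?_⟩
    rintro _ ⟨y, rfl⟩
    have := hu0 y
    have : (0:ℝ) ≤ η/32 * dist x y := by positivity
    linarith [hu0 y]
  have hξ0 : ∀ x, 0 ≤ ξ x := by
    intro x
    refine le_ciInf fun y => ?_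
    have : (0:ℝ) ≤ η/32 * dist x y := by positivity
    linarith [hu0 y]
  have hξu : ∀ x, ξ x ≤ u x := by
    intro x
    have := ciInf_le (hbdd x) x
    simpa using this
  have hLip : ∀ x x', ξ x ≤ ξ x' + η/32 * dist x x' := by
    intro x x'
    have : ξ x - η/32 * dist x x' ≤ ξ x' := by
      refine le_ciInf fun y => ?_
      have h1 : ξ x ≤ u y + η/32 * dist x y := ciInf_le (hbdd x) y
      have h2 : dist x y ≤ dist x x' + dist x' y := dist_triangle x x' y
      nlinarith [hη0]
    linarith
  have hξcont : Continuous ξ := by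
    have : LipschitzWith ⟨η/32, by positivity⟩ ξ := by
      refine LipschitzWith.of_dist_le_mul fun x y => ?_
      show dist (ξ x) (ξ y) ≤ η/32 * dist x y
      rw [Real.dist_eq, abs_sub_le_iff]
      constructor
      · have := hLip x y
        linarith
      · have := hLip y x
        rw [dist_comm] at this
        linarith
    exact this.continuous
  have hξω : ∀ x, ξ x ≤ ω x / 2 := fun x => (hξu x).trans (huω x)
  -- positivity on H
  have hξpos : ∀ x ∈ H, 0 < ξ x := by
    intro x₀ hx₀
    obtain ⟨δ₀, hδ₀, hball₀⟩ := Metric.isOpen_iff.1 hH x₀ hx₀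
    have hcont := hg.2 x₀ hx₀
    rw [Metric.continuousWithinAt_iff] at hcont
    obtain ⟨δg, hδg, hgrad⟩ := hcont (η/8) (by positivity)
    obtain ⟨δ₂, hδ₂, hω2⟩ := Metric.continuousAt_iff.1 hωc.continuousAt (ω x₀ / 2) (half_pos (hωH x₀ hx₀))
    set δ₁ : ℝ := min δg δ₀ with hδ₁def
    have hδ₁ : 0 < δ₁ := lt_min hδg hδ₀
    set c₀ : ℝ := min (min (η * δ₁ / 64) 1) (min (ω x₀ / 4) (η * ω x₀ / 128)) with hc₀def
    have hc₀ : 0 < c₀ := by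
      have := hωH x₀ hx₀
      refine lt_min (lt_min (by positivity) one_pos) (lt_min (by positivity) (by positivity))
    set δ : ℝ := min (δ₁/2) δ₂ with hδdef
    have hδ : 0 < δ := lt_min (by positivity) hδ₂
    have hmem : ∀ y : En n, dist y x₀ < δ → c₀ ∈ S y := by
      intro y hy
      have hyδ₁ : dist y x₀ < δ₁ / 2 := lt_of_lt_of_le hy (min_le_left _ _)
      have hyδ₂ : dist y x₀ < δ₂ := lt_of_lt_of_le hy (min_le_right _ _)
      have hωy : ω x₀ / 2 < ω y := by
        have := hω2 hyδ₂
        rw [Real.dist_eq, abs_lt] at this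
        linarith [this.1]
      refine ⟨hc₀.le, (min_le_left _ _).trans (min_le_right _ _), ?_, ?_, ?_⟩
      · have : c₀ ≤ ω x₀ / 4 := (min_le_right _ _).trans (min_le_left _ _)
        linarith
      · have : c₀ ≤ η * ω x₀ / 128 := (min_le_right _ _).trans (min_le_right _ _)
        nlinarith
      · intro z hz
        have hc₁ : c₀ ≤ η * δ₁ / 64 := (min_le_left _ _).trans (min_le_left _ _)
        have hzd : dist z y < δ₁ / 2 := by
          have : 32 * c₀ / η ≤ δ₁ / 2 := by
            rw [div_le_iff₀ hη0]
            nlinarith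
          linarith
        have hzx₀ : dist z x₀ < δ₁ := by
          have := dist_triangle z y x₀
          linarith
        have hzH : z ∈ H := hball₀ (lt_of_lt_of_le hzx₀ (min_le_right _ _))
        have hyH : y ∈ H := hball₀ (by
          have : dist y x₀ < δ₀ := lt_of_lt_of_le hyδ₁ (by
            have := min_le_right δg δ₀; linarith)
          exact this)
        refine ⟨hzH, ?_⟩
        have hz1 : dist (gradient g z) (gradient g x₀) < η / 8 :=
          hgrad hzH (lt_of_lt_of_le hzx₀ (min_le_left _ _))
        have hy1 : dist (gradient g y) (gradient g x₀) < η / 8 :=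
          hgrad hyH (by
            have : dist y x₀ < δg := lt_of_lt_of_le hyδ₁ (by
              have := min_le_left δg δ₀; linarith)
            exact this)
        have := dist_triangle (gradient g z) (gradient g x₀) (gradient g y)
        simp only [dist_eq_norm] at this hz1 hy1 ⊢
        have h5 : ‖gradient g x₀ - gradient g y‖ = ‖gradient g y - gradient g x₀‖ :=
          norm_sub_rev _ _
        linarith
    have hulb : ∀ y : En n, dist y x₀ < δ → c₀ ≤ u y := fun y hy =>
      le_csSup (hSb y) (hmem y hy)
    have : min c₀ (η/32 * δ) ≤ ξ x₀ := by
      refine le_ciInf fun y => ?_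
      by_cases hy : dist y x₀ < δ
      · have h1 := hulb y hy
        have : (0:ℝ) ≤ η/32 * dist x₀ y := by positivity
        have := min_le_left c₀ (η/32 * δ)
        linarith
      · push_neg at hy
        rw [dist_comm] at hy
        have h1 : η/32 * δ ≤ η/32 * dist x₀ y := by nlinarith
        have := min_le_right c₀ (η/32 * δ)
        linarith [hu0 y]
    have : (0:ℝ) < min c₀ (η/32 * δ) := lt_min hc₀ (by positivity)
    linarith
  refine ⟨ξ, hξcont, hξ0, hξpos, hξω, ?_⟩
  intro x hx h hh
  have hξx : 0 < ξ x := hξpos x hx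
  set r : ℝ := 16 * ξ x / η with hrdef
  have hr0 : 0 < r := by positivity
  have hmid : ξ x / 2 < u x := by linarith [hξu x]
  obtain ⟨t', ht'S, ht'⟩ := exists_lt_of_lt_csSup ⟨0, hS0 x⟩ hmid
  obtain ⟨ht'0, ht'1, ht'ω2, ht'ω64, ht'ball⟩ := ht'S
  have hrt' : r < 32 * t' / η := by
    rw [hrdef, div_lt_div_iff₀ hη0 hη0]
    nlinarith
  have hrω : r < ω x := by
    have hωx := hωH x hx
    have : 32 * t' / η ≤ ω x / 2 := by
      rw [div_le_iff₀ hη0]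
      nlinarith
    linarith
  refine ⟨r, hr0, hrω, ?_⟩
  intro y hy
  have hball : ∀ z : En n, dist z x ≤ r →
      z ∈ H ∧ ‖gradient g z - gradient g x‖ ≤ η / 4 := fun z hz =>
    ht'ball z (lt_of_le_of_lt hz hrt')
  -- mean value estimate for g
  set φ : En n →L[ℝ] ℝ := InnerProductSpace.toDual ℝ (En n) (gradient g x) with hφdef
  have hφeq : ∀ z : En n, DifferentiableAt ℝ g z →
      (InnerProductSpace.toDual ℝ (En n)) (gradient g z) = fderiv ℝ g z := by
    intro z _
    rw [gradient]
    exact (InnerProductSpace.toDual ℝ (En n)).apply_symm_apply _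
  have key : ‖g (x + y) - g x - φ ((x + y) - x)‖ ≤ η/4 * ‖(x + y) - x‖ := by
    refine (convex_closedBall x r).norm_image_sub_le_of_norm_fderiv_le'
      (fun z hz => hg.1 z (hball z (mem_closedBall.1 hz)).1) ?_
      (mem_closedBall_self hr0.le) ?_
    · intro z hz
      have hzH := (hball z (mem_closedBall.1 hz)).1
      have hzgrad := (hball z (mem_closedBall.1 hz)).2
      rw [← hφeq z (hg.1 z hzH), hφdef]
      rw [← map_sub]
      rw [LinearIsometryEquiv.norm_map]
      exact hzgrad
    · rw [mem_closedBall, dist_eq_norm]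
      simpa using hy
  have hsub : (x + y) - x = y := by abel
  rw [hsub] at key
  have hφy : φ y = (inner ℝ (gradient g x) y : ℝ) := InnerProductSpace.toDual_apply_apply
  rw [hφy, Real.norm_eq_abs] at key
  -- combine
  have e1 := hh (x + y)
  have e2 := hh x
  have e3 : ξ (x + y) ≤ ξ x + η/32 * r := by
    have := hLip (x + y) x
    have hd : dist (x + y) x = ‖y‖ := by
      simp [dist_eq_norm]
    rw [hd] at this
    have h32 := mul_le_mul_of_nonneg_left hy (by positivity : (0:ℝ) ≤ η/32)
    linarith
  have habs : |h (x + y) - h x - (inner ℝ (gradient g x) y : ℝ)| ≤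
      |h (x + y) - g (x + y)| + |g (x + y) - g x - (inner ℝ (gradient g x) y : ℝ)| +
      |h x - g x| := by
    have hd : h (x + y) - h x - (inner ℝ (gradient g x) y : ℝ) =
        (h (x + y) - g (x + y)) + (g (x + y) - g x - (inner ℝ (gradient g x) y : ℝ)) +
        (-(h x - g x)) := by ring
    rw [hd]
    refine (abs_add_le _ _).trans ?_
    rw [abs_neg]
    exact add_le_add (abs_add_le _ _) le_rfl
  have hηr : η * r = 16 * ξ x := by
    rw [hrdef]; field_simp
  have h4 : η/4 * ‖y‖ ≤ η/4 * r := mul_le_mul_of_nonneg_left hy (by positivity)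
  linarith [habs, key, e1, e2, e3, h4, hηr]

end
end

section
/- For every function f : ℝⁿ → ℝ, the set of points at which f is not (Fréchet) differentiable is a G_{δσ} set, i.e., it is a countable union of sets each of which is a countable intersection of open subsets of ℝⁿ. -/
open MeasureTheory Metric Set Filter
open scoped RealInnerProductSpace ENNReal NNReal Topology

noncomputable section

namespace St19

variable {n : ℕ}

/-- Approximate differentiability set: error `1/(k+1)` at scale `1/(m+1)`. -/
def S (f : En n → ℝ) (k m : ℕ) : Set (En n) :=
  {x | ∃ e : En n, ∀ y : En n, ‖y‖ < 1 / (m + 1) →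
    |f (x + y) - f x - ⟪e, y⟫| ≤ 1 / (k + 1) * ‖y‖}

/-- If `|⟪v,y⟫| ≤ c‖y‖` for all small `y`, then `‖v‖ ≤ c`. -/
lemma norm_le_of_inner_le {v : En n} {c r : ℝ} (hr : 0 < r) (hc : 0 ≤ c)
    (h : ∀ y : En n, ‖y‖ < r → |⟪v, y⟫| ≤ c * ‖y‖) : ‖v‖ ≤ c := by
  rcases eq_or_ne v 0 with rfl | hv
  · simpa using hc
  · have hvn : (0:ℝ) < ‖v‖ := norm_pos_iff.2 hv
    set y : En n := (r / 2) • (‖v‖⁻¹ • v) with hy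
    have hny : ‖y‖ = r / 2 := by
      rw [hy, norm_smul, norm_smul, norm_inv, norm_norm, Real.norm_eq_abs,
        abs_of_pos (by linarith), inv_mul_cancel₀ hvn.ne', mul_one]
    have hinner : ⟪v, y⟫ = (r / 2) * ‖v‖ := by
      rw [hy, real_inner_smul_right, real_inner_smul_right,
        real_inner_self_eq_norm_sq]
      field_simp
    have := h y (by rw [hny]; linarith)
    rw [hinner, hny, abs_of_pos (by positivity)] at this
    have h2 : (0:ℝ) < r / 2 := by linarith
    nlinarith

/-- If `x ∈ S f k (m k)` for all `k`, then `f` is differentiable at `x`. -/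
lemma differentiableAt_of_S {f : En n → ℝ} {x : En n}
    (h : ∀ k : ℕ, ∃ m : ℕ, x ∈ S f k m) : DifferentiableAt ℝ f x := by
  choose m e he using h
  -- the approximate gradients form a Cauchy sequence
  have key : ∀ k l : ℕ, ‖e k - e l‖ ≤ 1 / (k + 1) + 1 / (l + 1) := by
    intro k l
    have hr : (0:ℝ) < min (1 / ((m k : ℝ) + 1)) (1 / ((m l : ℝ) + 1)) := by positivity
    apply norm_le_of_inner_le hr (by positivity)
    intro y hy
    have h1 := he k y (lt_of_lt_of_le hy (min_le_left _ _))
    have h2 := he l y (lt_of_lt_of_le hy (min_le_right _ _))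
    have : ⟪e k - e l, y⟫ = (f (x + y) - f x - ⟪e l, y⟫) - (f (x + y) - f x - ⟪e k, y⟫) := by
      rw [inner_sub_left]; ring
    rw [this]
    calc |(f (x + y) - f x - ⟪e l, y⟫) - (f (x + y) - f x - ⟪e k, y⟫)|
        ≤ |f (x + y) - f x - ⟪e l, y⟫| + |f (x + y) - f x - ⟪e k, y⟫| := abs_sub _ _
      _ ≤ 1 / (l + 1) * ‖y‖ + 1 / (k + 1) * ‖y‖ := add_le_add h2 h1
      _ = (1 / (k + 1) + 1 / (l + 1)) * ‖y‖ := by ring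
  have hcauchy : CauchySeq e := by
    apply cauchySeq_of_le_tendsto_0 (fun N : ℕ => 2 / ((N : ℝ) + 1))
    · intro k l N hk hl
      rw [dist_eq_norm]
      have h1 : (1:ℝ) / (k + 1) ≤ 1 / (N + 1) :=
        one_div_le_one_div_of_le (by positivity) (by exact_mod_cast Nat.add_le_add_right hk 1)
      have h2 : (1:ℝ) / (l + 1) ≤ 1 / (N + 1) :=
        one_div_le_one_div_of_le (by positivity) (by exact_mod_cast Nat.add_le_add_right hl 1)
      calc ‖e k - e l‖ ≤ 1 / (k + 1) + 1 / (l + 1) := key k l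
        _ ≤ 2 / (N + 1) := by rw [show (2:ℝ)/(N+1) = 1/(N+1) + 1/(N+1) by ring]; linarith
    · have : Tendsto (fun n : ℕ => 1 / ((n : ℝ) + 1)) atTop (𝓝 0) := tendsto_one_div_add_atTop_nhds_zero_nat
      have h2 := this.const_mul (2:ℝ)
      simpa [div_eq_mul_inv, mul_comm] using h2
  obtain ⟨E, hE⟩ := cauchySeq_tendsto_of_complete hcauchy
  have hEe : ∀ k, ‖E - e k‖ ≤ 1 / (k + 1) := by
    intro k
    have t1 : Tendsto (fun l => ‖e l - e k‖) atTop (𝓝 ‖E - e k‖) :=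
      ((hE.sub tendsto_const_nhds).norm)
    have t2 : Tendsto (fun l : ℕ => 1 / (k + 1) + 1 / (l + 1 : ℝ)) atTop (𝓝 (1 / (k + 1) + 0)) :=
      tendsto_const_nhds.add tendsto_one_div_add_atTop_nhds_zero_nat
    rw [add_zero] at t2
    exact le_of_tendsto_of_tendsto' t1 t2 (fun l => (key l k).trans (by linarith))
  rw [show x = x from rfl]
  have : HasFDerivAt f (innerSL ℝ E) x := by
    rw [hasFDerivAt_iff_isLittleO_nhds_zero]
    rw [Asymptotics.isLittleO_iff]
    intro c hc
    obtain ⟨k, hk⟩ := exists_nat_one_div_lt (show (0:ℝ) < c / 2 by linarith)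
    have hrr : (0:ℝ) < 1 / ((m k : ℝ) + 1) := by positivity
    have hball : ∀ᶠ y : En n in 𝓝 0, ‖y‖ < 1 / ((m k : ℝ) + 1) := by
      filter_upwards [Metric.ball_mem_nhds (0 : En n) hrr] with y hy
      simpa [mem_ball_zero_iff] using hy
    filter_upwards [hball] with y hy
    have h1 := he k y hy
    have h2 : |⟪E - e k, y⟫| ≤ 1 / (k + 1) * ‖y‖ :=
      le_trans (abs_real_inner_le_norm _ _) (mul_le_mul_of_nonneg_right (hEe k) (norm_nonneg y))
    have : f (x + y) - f x - ⟪E, y⟫ =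
        (f (x + y) - f x - ⟪e k, y⟫) - ⟪E - e k, y⟫ := by
      rw [inner_sub_left]; ring
    rw [Real.norm_eq_abs, innerSL_apply_apply, this]
    calc |(f (x + y) - f x - ⟪e k, y⟫) - ⟪E - e k, y⟫|
        ≤ |f (x + y) - f x - ⟪e k, y⟫| + |⟪E - e k, y⟫| := abs_sub _ _
      _ ≤ 1 / (k + 1) * ‖y‖ + 1 / (k + 1) * ‖y‖ := add_le_add h1 h2
      _ ≤ c / 2 * ‖y‖ + c / 2 * ‖y‖ := by
          have := norm_nonneg y; nlinarith
      _ = c * ‖y‖ := by ring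
  exact this.differentiableAt

/-- If `f` is differentiable at `x` then `x ∈ S f k m` for suitable `m`. -/
lemma S_of_differentiableAt {f : En n → ℝ} {x : En n}
    (h : DifferentiableAt ℝ f x) (k : ℕ) : ∃ m : ℕ, x ∈ S f k m := by
  have hL := h.hasFDerivAt
  set L := fderiv ℝ f x with hLdef
  rw [hasFDerivAt_iff_isLittleO_nhds_zero, Asymptotics.isLittleO_iff] at hL
  have hc : (0:ℝ) < 1 / (k + 1) := by positivity
  have := hL hc
  obtain ⟨ε, hε, hev⟩ := Metric.eventually_nhds_iff.1 this
  obtain ⟨m, hm⟩ := exists_nat_one_div_lt hε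
  refine ⟨m, (InnerProductSpace.toDual ℝ (En n)).symm L, fun y hy => ?_⟩
  have hyb : dist y (0 : En n) < ε := by
    rw [dist_zero_right]; exact lt_trans hy hm
  have := hev hyb
  rw [Real.norm_eq_abs] at this
  simpa [InnerProductSpace.toDual_symm_apply] using this

/-- Key closure lemma: a continuity point in the closure of `S f k m` lies in `S f k m`. -/
lemma mem_S_of_mem_closure {f : En n → ℝ} {x : En n} {k m : ℕ}
    (hxC : ContinuousAt f x) (hx : x ∈ closure (S f k m)) : x ∈ S f k m := by
  -- continuity at x gives a ball where f is within 1 of f x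
  obtain ⟨δ₀, hδ₀, hball⟩ := Metric.continuousAt_iff.1 hxC 1 one_pos
  -- a sequence in S converging to x
  obtain ⟨u, humem, hulim⟩ := mem_closure_iff_seq_limit.1 hx
  choose e he using humem
  -- tail where u j is close to x
  have hev : ∀ᶠ j in atTop, dist (u j) x < δ₀ / 2 :=
    (hulim.eventually (Metric.ball_mem_nhds x (by linarith)))
  obtain ⟨J, hJ⟩ := hev.exists_forall_of_atTop
  set ρ : ℝ := min (1 / (2 * ((m:ℝ) + 1))) (δ₀ / 2) with hρdef
  have hρpos : 0 < ρ := lt_min (by positivity) (by linarith)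
  have hρm : ρ < 1 / ((m:ℝ) + 1) := by
    have h1 : ρ ≤ 1 / (2 * ((m:ℝ) + 1)) := min_le_left _ _
    have h2 : 1 / (2 * ((m:ℝ) + 1)) < 1 / ((m:ℝ) + 1) := by
      apply one_div_lt_one_div_of_lt (by positivity); nlinarith [(Nat.cast_nonneg m : (0:ℝ) ≤ m)]
    linarith
  have hρδ : ρ ≤ δ₀ / 2 := min_le_right _ _
  set M : ℝ := (2 + 1 / ((k:ℝ) + 1) * ρ) / ρ with hMdef
  -- gradients are bounded along the tail
  have hbdd : ∀ j, J ≤ j → ‖e j‖ ≤ M := by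
    intro j hj
    rcases eq_or_ne (e j) 0 with h0 | h0
    · rw [h0, norm_zero]; positivity
    · have hnej : (0:ℝ) < ‖e j‖ := norm_pos_iff.2 h0
      set y : En n := ρ • (‖e j‖⁻¹ • e j) with hy
      have hny : ‖y‖ = ρ := by
        rw [hy, norm_smul, norm_smul, norm_inv, norm_norm, Real.norm_eq_abs,
          abs_of_pos hρpos, inv_mul_cancel₀ hnej.ne', mul_one]
      have hinner : ⟪e j, y⟫ = ρ * ‖e j‖ := by
        rw [hy, real_inner_smul_right, real_inner_smul_right, real_inner_self_eq_norm_sq]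
        field_simp
      have hSj := he j y (by rw [hny]; exact hρm)
      rw [hinner, hny] at hSj
      -- u j + y is in the δ₀-ball around x
      have hdist : dist (u j + y) x < δ₀ := by
        calc dist (u j + y) x ≤ dist (u j + y) (u j) + dist (u j) x := dist_triangle _ _ _
          _ = ‖y‖ + dist (u j) x := by rw [dist_eq_norm, add_sub_cancel_left]
          _ < δ₀ := by rw [hny]; have := hJ j hj; linarith
      have hb1 : |f (u j + y) - f x| < 1 := by
        have := hball hdist; rwa [Real.dist_eq] at this
      have hb2 : |f (u j) - f x| < 1 := by
        have := hball (lt_trans (hJ j hj) (by linarith)); rwa [Real.dist_eq] at this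
      have habs : ρ * ‖e j‖ ≤ |f (u j + y) - f (u j)| + 1 / ((k:ℝ) + 1) * ρ := by
        have h3 : ρ * ‖e j‖ - (f (u j + y) - f (u j)) ≤ |f (u j + y) - f (u j) - ρ * ‖e j‖| := by
          rw [abs_sub_comm]; exact le_abs_self _
        have h4 : f (u j + y) - f (u j) ≤ |f (u j + y) - f (u j)| := le_abs_self _
        linarith [hSj]
      have h5 : |f (u j + y) - f (u j)| ≤ |f (u j + y) - f x| + |f (u j) - f x| := by
        have := abs_sub (f (u j + y) - f x) (f (u j) - f x)
        simpa using this
      have h6 : ρ * ‖e j‖ ≤ 2 + 1 / ((k:ℝ) + 1) * ρ := by linarith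
      rw [hMdef, le_div_iff₀ hρpos]
      linarith [h6]
  -- extract a convergent subsequence of the (shifted) gradients
  have hcomp : IsCompact (Metric.closedBall (0 : En n) M) := isCompact_closedBall _ _
  have hmem : ∀ j, (fun i => e (i + J)) j ∈ Metric.closedBall (0 : En n) M := by
    intro j
    rw [Metric.mem_closedBall, dist_zero_right]
    exact hbdd (j + J) (Nat.le_add_left _ _)
  obtain ⟨E, -, φ, hφ, hEconv⟩ := hcomp.tendsto_subseq hmem
  -- the shifted subsequence of u still converges to x
  have hulim2 : Tendsto (fun j => u (φ j + J)) atTop (𝓝 x) :=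
    hulim.comp ((tendsto_add_atTop_nat J).comp hφ.tendsto_atTop)
  refine ⟨E, fun y hy => ?_⟩
  -- pass to the limit in the inequality at u (φ j + J)
  set v : ℕ → En n := fun j => u (φ j + J) with hv
  set z : ℕ → En n := fun j => x + y - v j with hz
  have hzlim : Tendsto z atTop (𝓝 y) := by
    have : Tendsto (fun j => x + y - v j) atTop (𝓝 (x + y - x)) :=
      tendsto_const_nhds.sub hulim2
    simpa using this
  have hznorm : Tendsto (fun j => ‖z j‖) atTop (𝓝 ‖y‖) := hzlim.norm
  have hevz : ∀ᶠ j in atTop, ‖z j‖ < 1 / ((m:ℝ) + 1) := hznorm.eventually_lt_const hy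
  have hineq : ∀ᶠ j in atTop,
      |f (x + y) - f (v j) - ⟪e (φ j + J), z j⟫| ≤ 1 / ((k:ℝ) + 1) * ‖z j‖ := by
    filter_upwards [hevz] with j hj
    have := he (φ j + J) (z j) hj
    have hvz : v j + z j = x + y := by rw [hz]; exact add_sub_cancel _ _
    rwa [hvz] at this
  -- limits of each piece
  have hfv : Tendsto (fun j => f (v j)) atTop (𝓝 (f x)) := hxC.tendsto.comp hulim2
  have hEc : Tendsto (fun j => e (φ j + J)) atTop (𝓝 E) := hEconv
  have hinnerlim : Tendsto (fun j => ⟪e (φ j + J), z j⟫) atTop (𝓝 ⟪E, y⟫) :=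
    hEc.inner hzlim
  have hlhs : Tendsto (fun j => |f (x + y) - f (v j) - ⟪e (φ j + J), z j⟫|) atTop
      (𝓝 (|f (x + y) - f x - ⟪E, y⟫|)) :=
    ((tendsto_const_nhds.sub hfv).sub hinnerlim).abs
  have hrhs : Tendsto (fun j => 1 / ((k:ℝ) + 1) * ‖z j‖) atTop (𝓝 (1 / ((k:ℝ) + 1) * ‖y‖)) :=
    hznorm.const_mul _
  exact le_of_tendsto_of_tendsto hlhs hrhs hineq

end St19

theorem statement19 (n : ℕ) (f : En n → ℝ) :
    ∃ G : ℕ → ℕ → Set (En n), (∀ i j, IsOpen (G i j)) ∧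
      {x | ¬ DifferentiableAt ℝ f x} = ⋃ i, ⋂ j, G i j := by
  classical
  set C : Set (En n) := {x | ContinuousAt f x} with hC
  -- C is a countable intersection of open sets
  obtain ⟨V, hVopen, hVeq⟩ := (IsGδ.setOf_continuousAt f).eq_iInter_nat
  -- each (V j)ᶜ is closed hence Gδ
  have hW : ∀ j : ℕ, ∃ W : ℕ → Set (En n), (∀ i, IsOpen (W i)) ∧ (V j)ᶜ = ⋂ i, W i :=
    fun j => ((hVopen j).isClosed_compl.isGδ).eq_iInter_nat
  choose W hWopen hWeq using hW
  set T : ℕ → ℕ → Set (En n) := fun k m => closure (St19.S f k m) with hT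
  -- the differentiability set
  have hdiff : {x | DifferentiableAt ℝ f x} = C ∩ ⋂ k, ⋃ m, T k m := by
    ext x
    simp only [mem_setOf_eq, mem_inter_iff, mem_iInter, mem_iUnion]
    constructor
    · intro hd
      refine ⟨hd.continuousAt, fun k => ?_⟩
      obtain ⟨m, hm⟩ := St19.S_of_differentiableAt hd k
      exact ⟨m, subset_closure hm⟩
    · rintro ⟨hxC, hs⟩
      apply St19.differentiableAt_of_S
      intro k
      obtain ⟨m, hm⟩ := hs k
      exact ⟨m, St19.mem_S_of_mem_closure hxC hm⟩
  refine ⟨fun i j => if i % 2 = 0 then (T (i / 2) (Nat.unpair j).1)ᶜ ∩ V (Nat.unpair j).2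
    else W (i / 2) j, fun i j => ?_, ?_⟩
  · dsimp only
    split
    · exact (isOpen_compl_iff.2 isClosed_closure).inter (hVopen _)
    · exact hWopen _ _
  · ext x
    simp only [mem_setOf_eq, mem_iUnion, mem_iInter]
    constructor
    · intro hnd
      by_cases hxC : x ∈ C
      · -- then x fails the ⋂⋃ T part
        have hxT : ∃ k, ∀ m, x ∉ T k m := by
          by_contra hcon
          push_neg at hcon
          have : x ∈ {y | DifferentiableAt ℝ f y} := by
            rw [hdiff]
            exact ⟨hxC, mem_iInter.2 fun k => mem_iUnion.2 (hcon k)⟩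
          exact hnd this
        obtain ⟨k, hk⟩ := hxT
        refine ⟨2 * k, fun j => ?_⟩
        have h2 : (2 * k) % 2 = 0 := by omega
        have h3 : (2 * k) / 2 = k := by omega
        simp only [h2, if_pos rfl, h3]
        refine ⟨hk _, ?_⟩
        have : x ∈ ⋂ p, V p := by rw [← hVeq]; exact hxC
        exact mem_iInter.1 this _
      · -- x is a discontinuity point
        have : x ∈ ⋃ p, (V p)ᶜ := by
          simp only [mem_iUnion, mem_compl_iff]
          by_contra hcon
          push_neg at hcon
          exact hxC (by rw [hC, hVeq]; exact mem_iInter.2 hcon)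
        obtain ⟨p, hp⟩ := mem_iUnion.1 this
        refine ⟨2 * p + 1, fun j => ?_⟩
        have h2 : (2 * p + 1) % 2 ≠ 0 := by omega
        have h3 : (2 * p + 1) / 2 = p := by omega
        simp only [if_neg h2, h3]
        have : x ∈ ⋂ i, W p i := by rw [← hWeq]; exact hp
        exact mem_iInter.1 this j
    · rintro ⟨i, hi⟩ hd
      by_cases h2 : i % 2 = 0
      · -- x avoids all T (i/2) m, contradicting differentiability
        have hmem : x ∈ C ∩ ⋂ k, ⋃ m, T k m := by
          rw [← hdiff]; exact hd
        have hxT : x ∈ ⋃ m, T (i / 2) m := mem_iInter.1 hmem.2 (i / 2)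
        obtain ⟨m, hm⟩ := mem_iUnion.1 hxT
        have := hi (Nat.pair m 0)
        simp only [if_pos h2, Nat.unpair_pair] at this
        exact this.1 hm
      · -- x is a discontinuity point, contradicting differentiability
        have hxV : x ∈ (V (i / 2))ᶜ := by
          rw [hWeq]
          exact mem_iInter.2 fun j => by simpa [if_neg h2] using hi j
        have hxC : x ∈ C := hd.continuousAt
        rw [hC, hVeq] at hxC
        exact hxV (mem_iInter.1 hxC _)


end
end
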